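/- Let m ≥ 1 and let M : ZMod m → ZMod 3 be a cyclic word of length m over three letters. Then each letter occurs at least |deg(M)| times in M: for every i ∈ ZMod 3, the number of t : ZMod m with M(t) = i is at least |deg(M)|. -/

import Mathlib

/-- The signed transition count `deg_{ij}(M)` of a cyclic word `M : ZMod m → ZMod 3`:
the number of positions `t` with `M t = i` and `M (t+1) = j`, minus the number of
positions `t` with `M t = j` and `M (t+1) = i`. -/
def cyclicDegIJ (m : ℕ) (hm : 1 ≤ m) (M : ZMod m → ZMod 3) (i j : ZMod 3) : ℤ :=
  haveI : NeZero m := ⟨by omega⟩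
  ((Finset.univ.filter fun t : ZMod m => M t = i ∧ M (t + 1) = j).card : ℤ) -
    ((Finset.univ.filter fun t : ZMod m => M t = j ∧ M (t + 1) = i).card : ℤ)

/-- The degree of a cyclic word: `deg(M) := deg_{01}(M)`. -/
def cyclicDeg (m : ℕ) (hm : 1 ≤ m) (M : ZMod m → ZMod 3) : ℤ :=
  cyclicDegIJ m hm M 0 1

/-- The number of occurrences of the letter `i` in the cyclic word `M`. -/
def letterCount (m : ℕ) (hm : 1 ≤ m) (M : ZMod m → ZMod 3) (i : ZMod 3) : ℕ :=
  haveI : NeZero m := ⟨by omega⟩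
  (Finset.univ.filter fun t : ZMod m => M t = i).card

open Finset


private def hfun3 : ZMod 3 → ℤ := fun a => if a = 1 then 1 else 0

private lemma key3 (a b : ZMod 3) :
    ((if a = 0 ∧ b = 1 then (1:ℤ) else 0) - (if a = 1 ∧ b = 0 then 1 else 0))
    - ((if a = 1 ∧ b = 2 then 1 else 0) - (if a = 2 ∧ b = 1 then 1 else 0))
    = hfun3 b - hfun3 a := by revert a b; decide

private lemma degIJ_expand (m : ℕ) (hm : 1 ≤ m) (M : ZMod m → ZMod 3) (i j : ZMod 3) :
    haveI : NeZero m := ⟨by omega⟩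
    cyclicDegIJ m hm M i j =
      ∑ t : ZMod m, ((if M t = i ∧ M (t+1) = j then (1:ℤ) else 0)
        - (if M t = j ∧ M (t+1) = i then 1 else 0)) := by
  haveI : NeZero m := ⟨by omega⟩
  rw [Finset.sum_sub_distrib]
  unfold cyclicDegIJ
  rw [Finset.card_filter, Finset.card_filter]
  push_cast
  rfl

private lemma deg01_eq_deg12 (m : ℕ) (hm : 1 ≤ m) (M : ZMod m → ZMod 3) :
    cyclicDegIJ m hm M 0 1 = cyclicDegIJ m hm M 1 2 := by
  haveI : NeZero m := ⟨by omega⟩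
  have h : cyclicDegIJ m hm M 0 1 - cyclicDegIJ m hm M 1 2 = 0 := by
    rw [degIJ_expand, degIJ_expand, ← Finset.sum_sub_distrib]
    have : ∀ t : ZMod m,
        ((if M t = 0 ∧ M (t+1) = 1 then (1:ℤ) else 0) - (if M t = 1 ∧ M (t+1) = 0 then 1 else 0))
        - ((if M t = 1 ∧ M (t+1) = 2 then 1 else 0) - (if M t = 2 ∧ M (t+1) = 1 then 1 else 0))
        = hfun3 (M (t+1)) - hfun3 (M t) := fun t => key3 (M t) (M (t+1))
    rw [Finset.sum_congr rfl (fun t _ => this t), Finset.sum_sub_distrib]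
    have e : ∑ t : ZMod m, hfun3 (M (t+1)) = ∑ t : ZMod m, hfun3 (M t) :=
      Fintype.sum_equiv (Equiv.addRight 1) _ _ (fun t => rfl)
    rw [e, sub_self]
  linarith

private lemma abs_degIJ_le (m : ℕ) (hm : 1 ≤ m) (M : ZMod m → ZMod 3) (i j : ZMod 3) :
    |cyclicDegIJ m hm M i j| ≤ (letterCount m hm M i : ℤ) := by
  haveI : NeZero m := ⟨by omega⟩
  have hA : (Finset.univ.filter fun t : ZMod m => M t = i ∧ M (t + 1) = j).card
      ≤ letterCount m hm M i := by
    apply Finset.card_le_card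
    intro t ht
    simp only [Finset.mem_filter, Finset.mem_univ, true_and] at *
    exact ht.1
  have hB : (Finset.univ.filter fun t : ZMod m => M t = j ∧ M (t + 1) = i).card
      ≤ letterCount m hm M i := by
    apply Finset.card_le_card_of_injOn (fun t => t + 1)
    · intro t ht
      simp only [Finset.mem_coe, Finset.mem_filter, Finset.mem_univ, true_and] at *
      exact ht.2
    · intro a _ b _ h
      simpa using h
  rw [abs_le]
  unfold cyclicDegIJ
  constructor
  · have := (Int.ofNat_le).2 hB; omega
  · have := (Int.ofNat_le).2 hA; omega


/-- each of the three letters occurs at least `|deg(M)|` times in a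
cyclic word `M` over three letters. -/
theorem abs_cyclicDeg_le_letterCount (m : ℕ) (hm : 1 ≤ m) (M : ZMod m → ZMod 3) :
    ∀ i : ZMod 3, |cyclicDeg m hm M| ≤ (letterCount m hm M i : ℤ) := by
  intro i
  fin_cases i
  · exact abs_degIJ_le m hm M 0 1
  · have h : cyclicDeg m hm M = -(cyclicDegIJ m hm M 1 0) := by
      unfold cyclicDeg cyclicDegIJ; ring
    rw [h, abs_neg]
    exact abs_degIJ_le m hm M 1 0
  · rw [show cyclicDeg m hm M = cyclicDegIJ m hm M 1 2 from deg01_eq_deg12 m hm M,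
      show cyclicDegIJ m hm M 1 2 = -(cyclicDegIJ m hm M 2 1) by unfold cyclicDegIJ; ring,
      abs_neg]
    exact abs_degIJ_le m hm M 2 1
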